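/- Let p and p̃ be two design measures on the design points x_1, …, x_n ∈ ℝ^q, let t ∈ [0,1), and let 0 < ε < 1. Then H((1−ε)p + εp̃) = (1−ε)H(p) + εH(p̃) + t·ε(1−ε)·g₀g₀ᵀ, where g₀ = g(p̃) − g(p). In particular, H((1−ε)p + εp̃) − {(1−ε)H(p) + εH(p̃)} is positive semidefinite. -/

import Mathlib

open Matrix BigOperators Finset

noncomputable section

/-- A design measure: nonnegative masses summing to 1. -/
def designMeasure {n : ℕ} (p : Fin n → ℝ) : Prop :=
  (∀ i, 0 ≤ p i) ∧ ∑ i, p i = 1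

/-- G(p) = Σ pᵢ xᵢ xᵢᵀ. -/
def Gmat {q n : ℕ} (x : Fin n → Fin q → ℝ) (p : Fin n → ℝ) : Matrix (Fin q) (Fin q) ℝ :=
  ∑ i, p i • Matrix.vecMulVec (x i) (x i)

/-- g(p) = Σ pᵢ xᵢ. -/
def gvec {q n : ℕ} (x : Fin n → Fin q → ℝ) (p : Fin n → ℝ) : Fin q → ℝ :=
  ∑ i, p i • x i

/-- H(p) = G(p) − t g(p) g(p)ᵀ. -/
def Hmat {q n : ℕ} (t : ℝ) (x : Fin n → Fin q → ℝ) (p : Fin n → ℝ) : Matrix (Fin q) (Fin q) ℝ :=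
  Gmat x p - t • Matrix.vecMulVec (gvec x p) (gvec x p)

/-- ψ_{Di}(p). -/
def psiD {q n : ℕ} (t : ℝ) (x : Fin n → Fin q → ℝ) (p : Fin n → ℝ) (i : Fin n) : ℝ :=
  (1 - t) * (x i ⬝ᵥ ((Hmat t x p)⁻¹ *ᵥ x i))
    + t * ((x i - gvec x p) ⬝ᵥ ((Hmat t x p)⁻¹ *ᵥ (x i - gvec x p)))

/-- ψ_{Ai}(p). -/
def psiA {q n : ℕ} (t : ℝ) (x : Fin n → Fin q → ℝ) (p : Fin n → ℝ) (i : Fin n) : ℝ :=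
  (1 - t) * (x i ⬝ᵥ (((Hmat t x p)⁻¹ * (Hmat t x p)⁻¹) *ᵥ x i))
    + t * ((x i - gvec x p) ⬝ᵥ (((Hmat t x p)⁻¹ * (Hmat t x p)⁻¹) *ᵥ (x i - gvec x p)))

end

lemma psd_smul_vecMulVec {q : ℕ} (c : ℝ) (hc : 0 ≤ c) (v : Fin q → ℝ) :
    (c • Matrix.vecMulVec v v).PosSemidef := by
  rw [Matrix.posSemidef_iff_dotProduct_mulVec]
  constructor
  · ext i j
    simp [Matrix.vecMulVec_apply, Matrix.IsHermitian, mul_comm]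
  · intro y
    have h : Matrix.vecMulVec v v *ᵥ y = (v ⬝ᵥ y) • v := by
      ext i
      simp [Matrix.mulVec, Matrix.vecMulVec_apply, dotProduct, Finset.mul_sum,
        mul_comm, mul_left_comm]
    have h2 : star y ⬝ᵥ (c • Matrix.vecMulVec v v) *ᵥ y = c * ((v ⬝ᵥ y) * (v ⬝ᵥ y)) := by
      rw [Matrix.smul_mulVec, h, dotProduct_smul, dotProduct_smul]
      simp [dotProduct_comm y v, mul_assoc]
    rw [h2]
    exact mul_nonneg hc (mul_self_nonneg _)

theorem statement_0 {q n : ℕ} (hq : 1 ≤ q) (hn : 1 ≤ n)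
    (x : Fin n → Fin q → ℝ) (t : ℝ) (ht0 : 0 ≤ t) (ht1 : t < 1)
    (p ptilde : Fin n → ℝ) (hp : designMeasure p) (hpt : designMeasure ptilde)
    (ε : ℝ) (hε0 : 0 < ε) (hε1 : ε < 1) :
    Hmat t x ((1 - ε) • p + ε • ptilde)
      = (1 - ε) • Hmat t x p + ε • Hmat t x ptilde
        + (t * ε * (1 - ε)) •
            Matrix.vecMulVec (gvec x ptilde - gvec x p) (gvec x ptilde - gvec x p)
    ∧ (Hmat t x ((1 - ε) • p + ε • ptilde)
        - ((1 - ε) • Hmat t x p + ε • Hmat t x ptilde)).PosSemidef := by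
  have hg : gvec x ((1 - ε) • p + ε • ptilde) = (1 - ε) • gvec x p + ε • gvec x ptilde := by
    simp only [gvec, Finset.smul_sum, ← Finset.sum_add_distrib]
    apply Finset.sum_congr rfl
    intro i _
    funext j
    simp [Pi.add_apply, Pi.smul_apply, smul_eq_mul]
    ring
  have hG : Gmat x ((1 - ε) • p + ε • ptilde) = (1 - ε) • Gmat x p + ε • Gmat x ptilde := by
    simp only [Gmat, Finset.smul_sum, ← Finset.sum_add_distrib]
    apply Finset.sum_congr rfl
    intro i _
    ext a b
    simp [Matrix.vecMulVec_apply, Pi.add_apply, Pi.smul_apply, smul_eq_mul]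
    ring
  have key : Hmat t x ((1 - ε) • p + ε • ptilde)
      = (1 - ε) • Hmat t x p + ε • Hmat t x ptilde
        + (t * ε * (1 - ε)) •
            Matrix.vecMulVec (gvec x ptilde - gvec x p) (gvec x ptilde - gvec x p) := by
    ext a b
    simp only [Hmat, hg, hG, Matrix.sub_apply, Matrix.add_apply, Matrix.smul_apply,
      Matrix.vecMulVec_apply, Pi.add_apply, Pi.sub_apply, Pi.smul_apply, smul_eq_mul]
    ring
  refine ⟨key, ?_⟩
  have : Hmat t x ((1 - ε) • p + ε • ptilde)
      - ((1 - ε) • Hmat t x p + ε • Hmat t x ptilde)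
      = (t * ε * (1 - ε)) •
          Matrix.vecMulVec (gvec x ptilde - gvec x p) (gvec x ptilde - gvec x p) := by
    rw [key]; abel
  rw [this]
  exact psd_smul_vecMulVec _ (mul_nonneg (mul_nonneg ht0 hε0.le) (by linarith)) _
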